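/- Let G be a group whose commutator subgroup G' = ⁅G,G⁆ is nilpotent (as a group). Then the pseudocentre P(G) is nilpotent (as a group). -/

import Mathlib

/-- The pseudocentre of a group `G`: the intersection of the normal closures of the
centralizers of the elements of `G`. -/
def P (G : Type*) [Group G] : Subgroup G :=
  ⨅ g : G, Subgroup.normalClosure ↑(Subgroup.centralizer {g})

section Aux

open Subgroup
open scoped commutatorElement

variable {G : Type*} [Group G]

/-- A subgroup containing the commutator subgroup is normal. -/
lemma PseudoCentre.normal_of_commutator_le {H : Subgroup G} (h : commutator G ≤ H) :
    H.Normal := by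
  constructor
  intro n hn g
  have h1 : ⁅g, n⁆ ∈ commutator G :=
    Subgroup.commutator_mem_commutator (mem_top g) (mem_top n)
  have h2 : g * n * g⁻¹ = ⁅g, n⁆ * n := by
    rw [commutatorElement_def]; group
  rw [h2]
  exact mul_mem (h h1) hn

/-- The lower central series of the commutator subgroup, as subgroups of `G`. -/
def PseudoCentre.L (G : Type*) [Group G] : ℕ → Subgroup G
  | 0 => commutator G
  | n + 1 => ⁅PseudoCentre.L G n, commutator G⁆

lemma PseudoCentre.L_normal (n : ℕ) : (PseudoCentre.L G n).Normal := by
  induction n with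
  | zero => exact inferInstanceAs (commutator G).Normal
  | succ n ih => exact @Subgroup.commutator_normal _ _ _ _ ih inferInstance

lemma PseudoCentre.L_eq_map (n : ℕ) :
    PseudoCentre.L G n =
      (Subgroup.lowerCentralSeries (⊤ : Subgroup (commutator G)) n).map (commutator G).subtype := by
  induction n with
  | zero =>
    simp only [PseudoCentre.L, Subgroup.lowerCentralSeries_zero]
    rw [← MonoidHom.range_eq_map, Subgroup.range_subtype]
  | succ n ih =>
    show ⁅PseudoCentre.L G n, commutator G⁆ = _
    rw [show Subgroup.lowerCentralSeries (⊤ : Subgroup (commutator G)) (n + 1)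
        = ⁅Subgroup.lowerCentralSeries (⊤ : Subgroup (commutator G)) n, ⊤⁆ from rfl]
    rw [Subgroup.map_commutator, ih, ← MonoidHom.range_eq_map, Subgroup.range_subtype]

lemma PseudoCentre.P_le (g : G) : P G ≤ centralizer {g} ⊔ commutator G := by
  haveI : (centralizer {g} ⊔ commutator G).Normal :=
    PseudoCentre.normal_of_commutator_le le_sup_right
  intro y hy
  have hy' : y ∈ Subgroup.normalClosure ↑(centralizer {g}) := Subgroup.mem_iInf.mp hy g
  exact Subgroup.normalClosure_le_normal
    (SetLike.coe_subset_coe.mpr (le_sup_left : centralizer {g} ≤ _)) hy'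

lemma PseudoCentre.key (n : ℕ) : ⁅PseudoCentre.L G n, P G⁆ ≤ PseudoCentre.L G (n + 1) := by
  haveI := PseudoCentre.L_normal (G := G) (n + 1)
  rw [Subgroup.commutator_le]
  intro d hd y hy
  have hy2 : y ∈ centralizer {d} ⊔ commutator G := PseudoCentre.P_le d hy
  rw [← SetLike.mem_coe, Subgroup.mul_normal] at hy2
  obtain ⟨c, hc, e, he, rfl⟩ := hy2
  have hdc : d * c = c * d := hc d (Set.mem_singleton d)
  have hcomm : ⁅d, c * e⁆ = c * ⁅d, e⁆ * c⁻¹ := by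
    rw [commutatorElement_def, commutatorElement_def, mul_inv_rev,
      show d * (c * e) = c * (d * e) by rw [← mul_assoc, hdc, mul_assoc]]
    group
  rw [hcomm]
  have hde : ⁅d, e⁆ ∈ PseudoCentre.L G (n + 1) :=
    Subgroup.commutator_mem_commutator hd he
  exact (PseudoCentre.L_normal (n + 1)).conj_mem _ hde c

lemma PseudoCentre.lcs_le (n : ℕ) :
    (Subgroup.lowerCentralSeries (⊤ : Subgroup (P G)) (n + 1)).map (P G).subtype ≤ PseudoCentre.L G n := by
  induction n with
  | zero =>
    rw [show Subgroup.lowerCentralSeries (⊤ : Subgroup ↥(P G)) 1 = ⁅(⊤ : Subgroup ↥(P G)), ⊤⁆ from rfl,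
      Subgroup.map_commutator]
    exact (Subgroup.commutator_mono le_top le_top).trans le_rfl
  | succ n ih =>
    rw [show Subgroup.lowerCentralSeries (⊤ : Subgroup ↥(P G)) (n + 2)
        = ⁅Subgroup.lowerCentralSeries (⊤ : Subgroup ↥(P G)) (n + 1), ⊤⁆ from rfl,
      Subgroup.map_commutator, ← MonoidHom.range_eq_map, Subgroup.range_subtype]
    exact (Subgroup.commutator_mono ih le_rfl).trans (PseudoCentre.key n)

end Aux

/-- If the commutator subgroup of `G` is nilpotent, then so is the pseudocentre. -/
theorem pseudocentre_nilpotent_of_commutator_nilpotent {G : Type*} [Group G]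
    (h : Group.IsNilpotent (commutator G)) :
    Group.IsNilpotent (P G) := by
  obtain ⟨n, hn⟩ := nilpotent_iff_lowerCentralSeries.mp h
  rw [nilpotent_iff_lowerCentralSeries]
  refine ⟨n + 1, ?_⟩
  have hL : PseudoCentre.L G n = ⊥ := by
    rw [PseudoCentre.L_eq_map, hn, Subgroup.map_bot]
  have hmap : (Subgroup.lowerCentralSeries (⊤ : Subgroup (P G)) (n + 1)).map (P G).subtype = ⊥ :=
    le_bot_iff.mp (hL ▸ PseudoCentre.lcs_le n)
  rw [Subgroup.map_eq_bot_iff] at hmap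
  rw [Subgroup.ker_subtype] at hmap
  exact le_bot_iff.mp hmap
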